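/- The Dragonfly algebra does not satisfy the adjointness property with respect to ≤_ℓ: there exists β ∈ L* with * <_ℓ β <_ℓ 1 such that * ⊗_D 1 ≤_ℓ β but 1 ≰_ℓ * →_D β; also * ⊗_D * ≰_ℓ 0 while * ≤_ℓ * →_D 0. -/

import Mathlib

/-- A linearly ordered (bounded, integral-scale) residuated lattice:
`⊥` plays the role of `0` and `⊤` the role of `1`. -/
class LinResLat (L : Type*) extends LinearOrder L, BoundedOrder L where
  mul : L → L → L
  imp : L → L → L
  mul_comm : ∀ a b : L, mul a b = mul b a
  mul_assoc : ∀ a b c : L, mul (mul a b) c = mul a (mul b c)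
  mul_one : ∀ a : L, mul a ⊤ = a
  adjoint : ∀ a b c : L, mul a b ≤ c ↔ a ≤ imp b c
  bot_lt_top : (⊥ : L) < ⊤

/-- The Dragonfly carrier `L* = L ∪ {*}`. -/
inductive Dstar (L : Type*) where
  | of : L → Dstar L
  | star : Dstar L

namespace Dstar

variable {L : Type*} [LinResLat L]

/-- Dragonfly multiplication `⊗_D`. -/
def dmul : Dstar L → Dstar L → Dstar L
  | of a, of b => of (LinResLat.mul a b)
  | of a, star => if a = ⊥ then of ⊥ else star
  | star, of b => if b = ⊥ then of ⊥ else star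
  | star, star => star

/-- Dragonfly meet `∧_D`. -/
def dmeet : Dstar L → Dstar L → Dstar L
  | of a, of b => of (a ⊓ b)
  | of a, star => if a = ⊥ then of ⊥ else star
  | star, of b => if b = ⊥ then of ⊥ else star
  | star, star => star

/-- Dragonfly join `∨_D`. -/
def djoin : Dstar L → Dstar L → Dstar L
  | of a, of b => of (a ⊔ b)
  | of a, star => if a = ⊥ then star else of a
  | star, of b => if b = ⊥ then star else of b
  | star, star => star

/-- Dragonfly residuum `→_D`. -/
def dimp : Dstar L → Dstar L → Dstar L
  | of a, of b => of (LinResLat.imp a b)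
  | of a, star => if a = ⊥ then of ⊤ else star
  | star, of b => if b = ⊥ then star else of b
  | star, star => of ⊤

/-- Embedding of `L*` into `Lex (L × Bool)` realizing the linear order `≤_ℓ`
which extends the order of `L` with `0 <_ℓ * <_ℓ α` for all `α ∈ L \ {0}`. -/
def emb : Dstar L → Lex (L × Bool)
  | of a => toLex (a, false)
  | star => toLex ((⊥ : L), true)

theorem emb_injective : Function.Injective (emb (L := L)) := by
  intro x y h
  cases x <;> cases y <;>
    simp only [emb, toLex_inj, Prod.mk.injEq] at h <;> simp_all

/-- The linear order `≤_ℓ` on the Dragonfly algebra. -/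
instance : LinearOrder (Dstar L) := LinearOrder.lift' emb emb_injective

theorem le_def (x y : Dstar L) : x ≤ y ↔ emb x ≤ emb y := Iff.rfl

instance : OrderBot (Dstar L) where
  bot := of ⊥
  bot_le x := by
    cases x with
    | of a => rw [le_def]; simp only [emb, Prod.Lex.le_iff]; exact bot_le.lt_or_eq.imp id (by simp_all)
    | star => rw [le_def]; simp [emb, Prod.Lex.le_iff]
instance : OrderTop (Dstar L) where
  top := of ⊤
  le_top x := by
    cases x with
    | of a => rw [le_def]; simp only [emb, Prod.Lex.le_iff]; exact le_top.lt_or_eq.imp id (by simp_all)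
    | star => rw [le_def]; simp only [emb, Prod.Lex.le_iff]; exact Or.inl LinResLat.bot_lt_top

theorem bot_eq : (⊥ : Dstar L) = of ⊥ := rfl
theorem top_eq : (⊤ : Dstar L) = of ⊤ := rfl

variable {ι : Type*} [Fintype ι] [DecidableEq ι]

/-- The multiplication-based qualitative (DPR) integral on the Dragonfly algebra:
`∫^{⊗_D}_{DPR,μ} f = ⋁_{A ⊆ C} (μ(A) ⊗_D ⋀_{i ∈ A} f_i)`. -/
def integMul (μ : Finset ι → Dstar L) (f : ι → Dstar L) : Dstar L :=
  Finset.univ.powerset.sup fun A => dmul (μ A) (A.inf f)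

/-- The conjugate capacity `μ^c(A) = μ(C \ A) →_D 0`. -/
def conj (μ : Finset ι → Dstar L) (A : Finset ι) : Dstar L :=
  dimp (μ Aᶜ) (of ⊥)

/-- The residuum-based qualitative (DPR) integral on the Dragonfly algebra:
`∫^{→_D}_{DPR,μ} f = ⋀_{A ⊆ C} (μ^c(A) →_D ⋁_{i ∈ A} f_i)`. -/
def integImp (μ : Finset ι → Dstar L) (f : ι → Dstar L) : Dstar L :=
  Finset.univ.powerset.inf fun A => dimp (conj μ A) (A.sup f)

end Dstar

open Dstar in
/-- The Dragonfly algebra does not satisfy the adjointness property wrt `≤_ℓ`: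
there is `β` with `* <_ℓ β <_ℓ 1` such that `* ⊗_D 1 ≤_ℓ β` but
`1 ≰_ℓ * →_D β`; also `* ⊗_D * ≰_ℓ 0` while `* ≤_ℓ * →_D 0`. -/
theorem no_adjointness {L : Type*} [LinResLat L]
    (hβ : ∃ b : L, ⊥ < b ∧ b < ⊤) :
    (∃ β : Dstar L, Dstar.star < β ∧ β < Dstar.of ⊤ ∧
      dmul Dstar.star (Dstar.of ⊤) ≤ β ∧
      ¬ (Dstar.of (⊤ : L) ≤ dimp Dstar.star β)) ∧
    ¬ (dmul (Dstar.star : Dstar L) Dstar.star ≤ Dstar.of ⊥) ∧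
    (Dstar.star : Dstar L) ≤ dimp Dstar.star (Dstar.of ⊥) := by
  obtain ⟨b, hb0, hb1⟩ := hβ
  have htop : (⊤ : L) ≠ ⊥ := fun h => absurd (h ▸ LinResLat.bot_lt_top) (lt_irrefl _)
  refine ⟨⟨Dstar.of b, ?_, ?_, ?_, ?_⟩, ?_, ?_⟩
  · rw [lt_iff_le_not_ge, Dstar.le_def, Dstar.le_def]
    simp only [Dstar.emb, Prod.Lex.le_iff]
    constructor
    · exact Or.inl hb0
    · rintro (h | ⟨h, _⟩)
      · exact absurd h (not_lt.mpr hb0.le)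
      · exact absurd h.symm hb0.ne
  · rw [lt_iff_le_not_ge, Dstar.le_def, Dstar.le_def]
    simp only [Dstar.emb, Prod.Lex.le_iff]
    constructor
    · exact Or.inl hb1
    · rintro (h | ⟨h, _⟩)
      · exact absurd h (not_lt.mpr hb1.le)
      · exact absurd h.symm hb1.ne
  · show Dstar.dmul Dstar.star (Dstar.of ⊤) ≤ Dstar.of b
    rw [Dstar.dmul, if_neg htop, Dstar.le_def]
    simp only [Dstar.emb, Prod.Lex.le_iff]
    exact Or.inl hb0
  · rw [Dstar.dimp, if_neg hb0.ne', Dstar.le_def]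
    simp only [Dstar.emb, Prod.Lex.le_iff]
    rintro (h | ⟨h, _⟩)
    · exact absurd h (not_lt.mpr hb1.le)
    · exact absurd h (hb1.ne')
  · rw [Dstar.dmul, Dstar.le_def]
    simp only [Dstar.emb, Prod.Lex.le_iff]
    rintro (h | ⟨h, hle⟩)
    · exact absurd h (lt_irrefl _)
    · exact absurd hle (show ¬ (true ≤ false) by decide)
  · rw [Dstar.dimp, if_pos rfl]
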